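/- For distinct i < j < k ≤ n, the three elements \widetilde{w}_{ijk}(\widetilde{φ}(b_{ij})), \widetilde{w}_{ijk}(\widetilde{φ}(b_{ik})), \widetilde{w}_{ijk}(\widetilde{φ}(b_{jk})) of F_{n+1}^3 are pairwise distinct, and none of them is the identity. -/

import Mathlib

/-- Index type for the generators `a_{ijk}` of `G_n^3`: 3-element subsets of `Fin n`. -/
abbrev TripleIndex (n : ℕ) := {s : Finset (Fin n) // s.card = 3}

/-- Index type for the generators `b_{ij}` (with `i < j`) of the pure braid group. -/
abbrev PBGen (n : ℕ) := {p : Fin n × Fin n // p.1 < p.2}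

/-- Index type for the generators `σ_{ij}` (ordered pairs of distinct indices). -/
abbrev SGen (n : ℕ) := {p : Fin n × Fin n // p.1 ≠ p.2}

/-- Generators of the group `\widetilde{G}_n^3`. -/
abbrev TGen (n : ℕ) := TripleIndex n ⊕ SGen n

/-- `a_{ijk}` interpreted via `f`, equal to `1` when `i,j,k` are not pairwise distinct. -/
def atri {n : ℕ} {G : Type*} [Group G] (f : TripleIndex n → G) (i j k : Fin n) : G :=
  if h : ({i, j, k} : Finset (Fin n)).card = 3 then f ⟨{i, j, k}, h⟩ else 1

/-- `σ_{ij}` interpreted via `f`, equal to `1` when `i = j`. -/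
def sgen {n : ℕ} {G : Type*} [Group G] (f : SGen n → G) (i j : Fin n) : G :=
  if h : i ≠ j then f ⟨(i, j), h⟩ else 1

/-- `b_{ij}` interpreted via `f`, equal to `1` unless `i < j`. -/
def bgen {n : ℕ} {G : Type*} [Group G] (f : PBGen n → G) (i j : Fin n) : G :=
  if h : i < j then f ⟨(i, j), h⟩ else 1

/-- The letter `b_{ij}` in the free group on the pure braid generators. -/
def pbB {n : ℕ} (i j : Fin n) : FreeGroup (PBGen n) := bgen FreeGroup.of i j

/-- The letter `a_{ijk}` in the free group on the generators of `G_n^3`. -/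
def frA {n : ℕ} (i j k : Fin n) : FreeGroup (TripleIndex n) := atri FreeGroup.of i j k

/-- The letter `a_{ijk}` in the free group on the generators of `\widetilde{G}_n^3`. -/
def tA {n : ℕ} (i j k : Fin n) : FreeGroup (TGen n) :=
  atri (fun t => FreeGroup.of (Sum.inl t)) i j k

/-- The letter `σ_{ij}` in the free group on the generators of `\widetilde{G}_n^3`. -/
def tS {n : ℕ} (i j : Fin n) : FreeGroup (TGen n) :=
  sgen (fun p => FreeGroup.of (Sum.inr p)) i j

/-- The defining relators of the pure braid group `PB_n`
(Cohen–Falk–Randell presentation), written as relators `LHS * RHS⁻¹`. -/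
def PBRels (n : ℕ) : Set (FreeGroup (PBGen n)) :=
  { x | ∃ i j r s : Fin n, i < j ∧ r < s ∧
      (((s < i ∨ j < r) ∧
          x = pbB r s * pbB i j * (pbB r s)⁻¹ * (pbB i j)⁻¹) ∨
        ((j = r) ∧
          x = pbB r s * pbB i j * (pbB r s)⁻¹ * ((pbB i s)⁻¹ * pbB i j * pbB i s)⁻¹) ∨
        ((i < r ∧ j = s) ∧
          x = pbB r s * pbB i j * (pbB r s)⁻¹ *
            ((pbB i j)⁻¹ * (pbB i r)⁻¹ * pbB i j * pbB i r * pbB i j)⁻¹) ∨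
        ((i < r ∧ r < j ∧ j < s) ∧
          x = pbB r s * pbB i j * (pbB r s)⁻¹ *
            ((pbB i s)⁻¹ * (pbB i r)⁻¹ * pbB i s * pbB i r * pbB i j *
              (pbB i r)⁻¹ * (pbB i s)⁻¹ * pbB i r * pbB i s)⁻¹)) }

/-- The pure braid group on `n` strands, via its standard presentation. -/
abbrev PBn (n : ℕ) := PresentedGroup (PBRels n)

/-- The defining relators of `G_n^3`. -/
def Gn3Rels (n : ℕ) : Set (FreeGroup (TripleIndex n)) :=
  { x | (∃ t : TripleIndex n, x = FreeGroup.of t * FreeGroup.of t) ∨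
      (∃ t u : TripleIndex n, (t.1 ∩ u.1).card ≤ 1 ∧
        x = FreeGroup.of t * FreeGroup.of u * (FreeGroup.of u * FreeGroup.of t)⁻¹) ∨
      (∃ i j k l : Fin n, [i, j, k, l].Nodup ∧
        x = frA i j k * frA i j l * frA i k l * frA j k l *
          (frA j k l * frA i k l * frA i j l * frA i j k)⁻¹) }

/-- The group `G_n^3`. -/
abbrev Gn3 (n : ℕ) := PresentedGroup (Gn3Rels n)

/-- The defining relators of `\widetilde{G}_n^3`, relations (a)–(i). -/
def TGn3Rels (n : ℕ) : Set (FreeGroup (TGen n)) :=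
  { x | (∃ t : TripleIndex n,
          x = FreeGroup.of (Sum.inl t) * FreeGroup.of (Sum.inl t)) ∨
      (∃ t u : TripleIndex n, (t.1 ∩ u.1).card ≤ 1 ∧
          x = FreeGroup.of (Sum.inl t) * FreeGroup.of (Sum.inl u) *
            (FreeGroup.of (Sum.inl u) * FreeGroup.of (Sum.inl t))⁻¹) ∨
      (∃ i j k l : Fin n, [i, j, k, l].Nodup ∧
          x = tA i j k * tA i j l * tA i k l * tA j k l *
            (tA j k l * tA i k l * tA i j l * tA i j k)⁻¹) ∨
      (∃ i j k l : Fin n, [i, j, k, l].Nodup ∧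
          x = tS i j * tS k l * (tS k l * tS i j)⁻¹) ∨
      (∃ (i j : Fin n) (u : TripleIndex n), i ≠ j ∧
          (({i, j} : Finset (Fin n)) ∩ u.1).card ≤ 1 ∧
          x = tS i j * FreeGroup.of (Sum.inl u) *
            (FreeGroup.of (Sum.inl u) * tS i j)⁻¹) ∨
      (∃ i j k : Fin n, [i, j, k].Nodup ∧
          (x = tA i j k * tS i j * tS i k * tS j k *
              (tS j k * tS i k * tS i j * tA i j k)⁻¹ ∨
            x = tS i j * tA i j k * tS i k * tS j k *
              (tS j k * tS i k * tA i j k * tS i j)⁻¹ ∨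
            x = tS i j * tS i k * tA i j k * tS j k *
              (tS j k * tA i j k * tS i k * tS i j)⁻¹ ∨
            x = tS i j * tS i k * tS j k * tA i j k *
              (tA i j k * tS j k * tS i k * tS i j)⁻¹)) }

/-- The group `\widetilde{G}_n^3`. -/
abbrev TGn3 (n : ℕ) := PresentedGroup (TGn3Rels n)

/-- Ordered product of `f l` over all `l > k`, in increasing order of `l`. -/
def listUp {n : ℕ} {G : Type*} [Group G] (f : Fin n → G) (k : Fin n) : G :=
  (((List.finRange n).filter fun l => decide (k < l)).map f).prod

/-- Ordered product of `f l` over all `l < k`, in increasing order of `l`. -/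
def listLow {n : ℕ} {G : Type*} [Group G] (f : Fin n → G) (k : Fin n) : G :=
  (((List.finRange n).filter fun l => decide (l < k)).map f).prod

/-- The word `c_{i,k} = (∏_{l=k+1}^{n} a_{ikl}) (∏_{l=1}^{k-1} a_{ikl})`
(degenerate letters give `1`, so the products effectively omit `l ∈ {i,k}`). -/
def cPhi {n : ℕ} {G : Type*} [Group G] (f : TripleIndex n → G) (i k : Fin n) : G :=
  listUp (fun l => atri f i k l) k * listLow (fun l => atri f i k l) k

/-- The word `φ(b_{ij}) = c_{i,i+1}⁻¹ ⋯ c_{i,j-1}⁻¹ (c_{i,j})² c_{i,j-1} ⋯ c_{i,i+1}`. -/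
def phiWord {n : ℕ} {G : Type*} [Group G] (f : TripleIndex n → G) (i j : Fin n) : G :=
  (((List.finRange n).filter fun m => decide (i < m ∧ m < j)).map
      fun m => (cPhi f i m)⁻¹).prod *
    (cPhi f i j) ^ 2 *
    ((((List.finRange n).filter fun m => decide (i < m ∧ m < j)).map
      fun m => (cPhi f i m)⁻¹).prod)⁻¹

/-- `φ` on the generators of `PB_n`, with values in `G_n^3`. -/
def phiGen {n : ℕ} : PBGen n → Gn3 n :=
  fun p => phiWord PresentedGroup.of p.1.1 p.1.2

/-- The word `(∏_{k=m+1}^{n} a_{imk}) · σ · (∏_{k=1}^{m-1} a_{imk})` for a middle letter `σ`. -/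
def cMid {n : ℕ} {G : Type*} [Group G] (fa : TripleIndex n → G) (σmid : G) (i m : Fin n) : G :=
  listUp (fun k => atri fa i m k) m * σmid * listLow (fun k => atri fa i m k) m

/-- The word `\widetilde{φ}(b_{ij}) = c_{i,i+1}⁻¹ ⋯ c_{i,j-1}⁻¹ \bar c_{i,j} \bar c_{j,i}
c_{i,j-1} ⋯ c_{i,i+1}`, where `c_{i,m}`, `\bar c_{i,m}`, `\bar c_{j,i}` are as in the paper. -/
def tphiWord {n : ℕ} {G : Type*} [Group G] (fa : TripleIndex n → G) (fs : SGen n → G)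
    (i j : Fin n) : G :=
  (((List.finRange n).filter fun m => decide (i < m ∧ m < j)).map
      fun m => (cMid fa (sgen fs i m)⁻¹ i m)⁻¹).prod *
    cMid fa (sgen fs i j) i j * cMid fa (sgen fs j i) i j *
    ((((List.finRange n).filter fun m => decide (i < m ∧ m < j)).map
      fun m => (cMid fa (sgen fs i m)⁻¹ i m)⁻¹).prod)⁻¹

/-- `\widetilde{φ}` on the generators of `PB_n`, with values in `\widetilde{G}_n^3`. -/
def tphiGen {n : ℕ} : PBGen n → TGn3 n :=
  fun p => tphiWord (fun t => PresentedGroup.of (Sum.inl t))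
    (fun q => PresentedGroup.of (Sum.inr q)) p.1.1 p.1.2
/-- Index set for the free product `F_n^3`: functions from `{1,…,n} ∖ {i,j,k}` to `ℤ/2 × ℤ/2`. -/
def Fn3Idx (n : ℕ) (i j k : Fin n) : Type :=
  {l : Fin n // l ≠ i ∧ l ≠ j ∧ l ≠ k} → ZMod 2 × ZMod 2

/-- Relators of `F_n^3`: every generator is an involution. -/
def Fn3Rels (n : ℕ) (i j k : Fin n) : Set (FreeGroup (Fn3Idx n i j k)) :=
  { x | ∃ f : Fn3Idx n i j k, x = FreeGroup.of f * FreeGroup.of f }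

/-- The group `F_n^3`: the free product of copies of `ℤ/2` indexed by `Fn3Idx n i j k`. -/
abbrev Fn3 (n : ℕ) (i j k : Fin n) := PresentedGroup (Fn3Rels n i j k)

/-- The number of occurrences of the letter `a_{xyz}` in a word in the generators of `G_n^3`. -/
def cntA {n : ℕ} (L : List (TripleIndex n)) (x y z : Fin n) : ℕ :=
  L.countP fun t => decide (t.1 = ({x, y, z} : Finset (Fin n)))

/-- The index of an occurrence of `a_{ijk}` whose preceding prefix is `pre`:
`l ↦ (N_{jkl} + N_{ijl}, N_{ikl} + N_{ijl})` in `ℤ/2 × ℤ/2`. -/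
def idxOf {n : ℕ} (i j k : Fin n) (pre : List (TripleIndex n)) : Fn3Idx n i j k :=
  fun l => (((cntA pre j k l.1 + cntA pre i j l.1 : ℕ) : ZMod 2),
            ((cntA pre i k l.1 + cntA pre i j l.1 : ℕ) : ZMod 2))

/-- Auxiliary recursion computing `w_{ijk}` of a word: `pre` is the prefix read so far. -/
def wRec {n : ℕ} (i j k : Fin n) :
    List (TripleIndex n) → List (TripleIndex n) → Fn3 n i j k
  | _, [] => 1
  | pre, t :: rest =>
      (if t.1 = ({i, j, k} : Finset (Fin n)) then
          PresentedGroup.of (idxOf i j k pre) else 1) *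
        wRec i j k (pre ++ [t]) rest

/-- The index-counting map `w_{ijk}` on words in the generators of `G_n^3`. -/
def wWord {n : ℕ} (i j k : Fin n) (L : List (TripleIndex n)) : Fn3 n i j k :=
  wRec i j k [] L

/-- The element of `G_n^3` represented by a word in the generators. -/
def gn3Word {n : ℕ} (L : List (TripleIndex n)) : Gn3 n :=
  (L.map PresentedGroup.of).prod

/-- The inclusion of triples of `{1,…,n}` into triples of `{1,…,n+1}`. -/
def castTriple {n : ℕ} (t : TripleIndex n) : TripleIndex (n + 1) :=
  ⟨t.1.map ⟨Fin.castSucc, Fin.castSucc_injective n⟩, by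
    rw [Finset.card_map]; exact t.2⟩

/-- The triple `{i, j, n+1}` associated with `σ_{ij}`. -/
def sigTriple {n : ℕ} (p : SGen n) : TripleIndex (n + 1) :=
  ⟨{p.1.1.castSucc, p.1.2.castSucc, Fin.last n},
    Finset.card_eq_three.mpr ⟨_, _, _,
      fun h => p.2 (Fin.castSucc_injective n h),
      (Fin.castSucc_lt_last _).ne, (Fin.castSucc_lt_last _).ne, rfl⟩⟩

/-- `π` on the generators of `\widetilde{G}_n^3`: `a_{ijk} ↦ a_{ijk}`, `σ_{ij} ↦ a_{ij(n+1)}`. -/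
def piGen {n : ℕ} : TGen n → Gn3 (n + 1)
  | Sum.inl t => PresentedGroup.of (castTriple t)
  | Sum.inr p => PresentedGroup.of (sigTriple p)

namespace St9
open List

variable {n : ℕ}

/-! ### basic finset helpers -/

lemma pair_eq_pair_iff {α : Type*} [DecidableEq α] (a b c d : α) :
    ({a, b} : Finset α) = {c, d} ↔ a = c ∧ b = d ∨ a = d ∧ b = c := by
  rw [← Finset.coe_inj]; push_cast
  exact Set.pair_eq_pair_iff

lemma castTriple_val (t : TripleIndex n) :
    (castTriple t).1 = t.1.map ⟨Fin.castSucc, Fin.castSucc_injective n⟩ := rfl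

lemma last_not_mem_castTriple (t : TripleIndex n) : Fin.last n ∉ (castTriple t).1 := by
  simp only [castTriple_val, Finset.mem_map, Function.Embedding.coeFn_mk]
  rintro ⟨x, -, hx⟩
  exact (Fin.castSucc_lt_last x).ne hx

lemma map_triple (a b c : Fin n) :
    ({a, b, c} : Finset (Fin n)).map ⟨Fin.castSucc, Fin.castSucc_injective n⟩ =
      {a.castSucc, b.castSucc, c.castSucc} := by
  simp [Finset.map_insert]

lemma castTriple_triple_val (a b c : Fin n) (h : ({a, b, c} : Finset (Fin n)).card = 3) :
    (castTriple ⟨{a, b, c}, h⟩).1 = {a.castSucc, b.castSucc, c.castSucc} := by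
  rw [castTriple_val, map_triple]

lemma cast_triple_eq_iff (a b c d e f : Fin n) :
    ({a.castSucc, b.castSucc, c.castSucc} : Finset (Fin (n+1))) =
      {d.castSucc, e.castSucc, f.castSucc} ↔ ({a, b, c} : Finset (Fin n)) = {d, e, f} := by
  rw [← map_triple, ← map_triple]
  exact (Finset.map_injective _).eq_iff

lemma sigTriple_val (p : SGen n) :
    (sigTriple p).1 = {p.1.1.castSucc, p.1.2.castSucc, Fin.last n} := rfl

lemma last_mem_sig (a b : Fin (n+1)) :
    Fin.last n ∈ ({a, b, Fin.last n} : Finset (Fin (n+1))) := by simp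

lemma sig_ne_cast (p : SGen n) (t : TripleIndex n) : (sigTriple p).1 ≠ (castTriple t).1 := by
  intro h
  exact last_not_mem_castTriple t (h ▸ last_mem_sig _ _)

lemma sig_eq_sig_iff (a b x y : Fin n) :
    ({a.castSucc, b.castSucc, Fin.last n} : Finset (Fin (n+1))) =
      {x.castSucc, y.castSucc, Fin.last n} ↔ ({a, b} : Finset (Fin n)) = {x, y} := by
  have e1 : ({a.castSucc, b.castSucc, Fin.last n} : Finset (Fin (n+1))) =
      insert (Fin.last n) {a.castSucc, b.castSucc} := by
    ext x; simp; tauto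
  have e2 : ({x.castSucc, y.castSucc, Fin.last n} : Finset (Fin (n+1))) =
      insert (Fin.last n) {x.castSucc, y.castSucc} := by
    ext z; simp; tauto
  have ha : Fin.last n ∉ ({a.castSucc, b.castSucc} : Finset (Fin (n+1))) := by
    simp only [Finset.mem_insert, Finset.mem_singleton, not_or]
    exact ⟨(Fin.castSucc_lt_last a).ne', (Fin.castSucc_lt_last b).ne'⟩
  have hx : Fin.last n ∉ ({x.castSucc, y.castSucc} : Finset (Fin (n+1))) := by
    simp only [Finset.mem_insert, Finset.mem_singleton, not_or]
    exact ⟨(Fin.castSucc_lt_last x).ne', (Fin.castSucc_lt_last y).ne'⟩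
  rw [e1, e2]
  constructor
  · intro h
    have h2 : ({a.castSucc, b.castSucc} : Finset (Fin (n+1))) = {x.castSucc, y.castSucc} := by
      rw [← Finset.erase_insert ha, h, Finset.erase_insert hx]
    rw [pair_eq_pair_iff] at h2 ⊢
    rcases h2 with ⟨h1, h2⟩ | ⟨h1, h2⟩
    · exact Or.inl ⟨Fin.castSucc_injective n h1, Fin.castSucc_injective n h2⟩
    · exact Or.inr ⟨Fin.castSucc_injective n h1, Fin.castSucc_injective n h2⟩
  · intro h
    rw [pair_eq_pair_iff] at h
    rcases h with ⟨h1, h2⟩ | ⟨h1, h2⟩ <;> subst h1 <;> subst h2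
    · rfl
    · congr 1
      rw [pair_eq_pair_iff]; tauto

end St9
namespace St9

variable {n : ℕ}

/-- memberships from a triple equality -/
lemma triple_eq_mem {a b c d e f : Fin n} (h : ({a, b, c} : Finset (Fin n)) = {d, e, f}) :
    (a = d ∨ a = e ∨ a = f) ∧ (b = d ∨ b = e ∨ b = f) ∧ (c = d ∨ c = e ∨ c = f) ∧
    (d = a ∨ d = b ∨ d = c) ∧ (e = a ∨ e = b ∨ e = c) ∧ (f = a ∨ f = b ∨ f = c) := by
  have hmem : ∀ x : Fin n, (x = a ∨ x = b ∨ x = c) ↔ (x = d ∨ x = e ∨ x = f) := by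
    intro x
    have := Finset.ext_iff.mp h x
    simpa using this
  refine ⟨?_, ?_, ?_, ?_, ?_, ?_⟩
  · exact (hmem a).mp (Or.inl rfl)
  · exact (hmem b).mp (Or.inr (Or.inl rfl))
  · exact (hmem c).mp (Or.inr (Or.inr rfl))
  · exact (hmem d).mpr (Or.inl rfl)
  · exact (hmem e).mpr (Or.inr (Or.inl rfl))
  · exact (hmem f).mpr (Or.inr (Or.inr rfl))

/-! ### involutivity in `Gn3` -/

lemma gn3_of_sq (t : TripleIndex n) :
    (PresentedGroup.of (rels := Gn3Rels n) t) * PresentedGroup.of t = 1 := by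
  have hmem : (FreeGroup.of t * FreeGroup.of t) ∈ Subgroup.normalClosure (Gn3Rels n) :=
    Subgroup.subset_normalClosure (Or.inl ⟨t, rfl⟩)
  show (PresentedGroup.mk (Gn3Rels n)) (FreeGroup.of t) *
      (PresentedGroup.mk (Gn3Rels n)) (FreeGroup.of t) = 1
  rw [← map_mul]
  exact (QuotientGroup.eq_one_iff _).mpr hmem

lemma gn3_of_inv (t : TripleIndex n) :
    (PresentedGroup.of (rels := Gn3Rels n) t)⁻¹ = PresentedGroup.of t :=
  inv_eq_of_mul_eq_one_right (gn3_of_sq t)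

/-! ### list-word lemmas for `gn3Word` -/

lemma gn3Word_append (L1 L2 : List (TripleIndex n)) :
    gn3Word (L1 ++ L2) = gn3Word L1 * gn3Word L2 := by
  simp [gn3Word]

lemma gn3Word_singleton (t : TripleIndex n) : gn3Word [t] = PresentedGroup.of t := by
  simp [gn3Word]

lemma gn3Word_inv (L : List (TripleIndex n)) : (gn3Word L)⁻¹ = gn3Word L.reverse := by
  induction L with
  | nil => simp [gn3Word]
  | cons t L ih =>
      have : gn3Word (t :: L) = PresentedGroup.of t * gn3Word L := by simp [gn3Word]
      rw [this, mul_inv_rev, ih, List.reverse_cons, gn3Word_append, gn3Word_singleton,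
        gn3_of_inv]

lemma gn3Word_flatMap {β : Type*} (M : List β) (f : β → List (TripleIndex n)) :
    gn3Word (M.flatMap f) = (M.map fun m => gn3Word (f m)).prod := by
  induction M with
  | nil => simp [gn3Word]
  | cons m M ih => simp [List.flatMap_cons, gn3Word_append, ih]

end St9
namespace St9
open List

variable {n : ℕ}

lemma sorted_filter_split {α : Type*} [LinearOrder α] :
    ∀ (l : List α), l.Pairwise (· < ·) → ∀ (c : α), c ∈ l → ∀ (p : α → Bool), p c = true →
      l.filter p = (l.filter fun x => p x && decide (x < c)) ++
        c :: (l.filter fun x => p x && decide (c < x)) := by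
  intro l hl
  induction l with
  | nil => intro c hc; simp at hc
  | cons a t ih =>
      intro c hc p hpc
      have ha : ∀ x ∈ t, a < x := fun x hx => (List.pairwise_cons.mp hl).1 x hx
      rcases List.mem_cons.mp hc with rfl | hct
      · have h1 : (t.filter fun x => p x && decide (x < c)) = [] := by
          apply List.filter_eq_nil_iff.mpr
          intro x hx
          simp [not_lt.mpr (ha x hx).le]
        have h2 : (t.filter fun x => p x && decide (c < x)) = List.filter p t := by
          apply List.filter_congr
          intro x hx
          simp [ha x hx]
        simp [List.filter_cons, hpc, h1, h2]
      · have hac : a < c := ha c hct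
        have ihs := ih (List.pairwise_cons.mp hl).2 c hct p hpc
        by_cases hpa : p a = true
        · simp [List.filter_cons, hpa, hac, ihs, (lt_asymm hac : ¬ c < a)]
        · simp only [Bool.not_eq_true] at hpa
          simp [List.filter_cons, hpa, ihs]

lemma finRange_filter_split (c : Fin n) (p : Fin n → Bool) (hpc : p c = true) :
    (List.finRange n).filter p = ((List.finRange n).filter fun x => p x && decide (x < c)) ++
      c :: ((List.finRange n).filter fun x => p x && decide (c < x)) :=
  sorted_filter_split _ (List.pairwise_lt_finRange n) c (List.mem_finRange c) p hpc

end St9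
namespace St9
open List

variable {n : ℕ}

/-! ### pushing a hom through `tphiWord` -/

section maps
variable {G H : Type*} [Group G] [Group H] (φ : G →* H)

lemma map_atri (f : TripleIndex n → G) (a b c : Fin n) :
    φ (atri f a b c) = atri (φ ∘ f) a b c := by
  unfold atri; split <;> simp

lemma map_sgen (f : SGen n → G) (a b : Fin n) :
    φ (sgen f a b) = sgen (φ ∘ f) a b := by
  unfold sgen; split <;> simp

lemma map_listUp (f : Fin n → G) (m : Fin n) :
    φ (listUp f m) = listUp (φ ∘ f) m := by
  unfold listUp; rw [map_list_prod, List.map_map]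

lemma map_listLow (f : Fin n → G) (m : Fin n) :
    φ (listLow f m) = listLow (φ ∘ f) m := by
  unfold listLow; rw [map_list_prod, List.map_map]

lemma map_cMid (fa : TripleIndex n → G) (σ : G) (a m : Fin n) :
    φ (cMid fa σ a m) = cMid (φ ∘ fa) (φ σ) a m := by
  unfold cMid
  rw [map_mul, map_mul, map_listUp, map_listLow]
  have hfun : (⇑φ ∘ fun l => atri fa a m l) = fun l => atri (⇑φ ∘ fa) a m l :=
    funext fun l => map_atri φ fa a m l
  rw [hfun]

lemma map_tphiWord (fa : TripleIndex n → G) (fs : SGen n → G) (a b : Fin n) :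
    φ (tphiWord fa fs a b) = tphiWord (φ ∘ fa) (φ ∘ fs) a b := by
  unfold tphiWord
  rw [map_mul, map_mul, map_mul, map_inv, map_list_prod, List.map_map, map_cMid, map_cMid,
    map_sgen, map_sgen]
  have hfun : (⇑φ ∘ fun m => (cMid fa (sgen fs a m)⁻¹ a m)⁻¹) =
      fun m => (cMid (⇑φ ∘ fa) (sgen (⇑φ ∘ fs) a m)⁻¹ a m)⁻¹ := by
    funext m
    simp only [Function.comp_apply, map_inv, map_cMid, map_sgen]
  rw [hfun]
end maps

/-! ### concrete letter lists -/

def FA : TripleIndex n → Gn3 (n+1) := fun t => PresentedGroup.of (castTriple t)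
def FS : SGen n → Gn3 (n+1) := fun q => PresentedGroup.of (sigTriple q)

def atriList (a m l : Fin n) : List (TripleIndex (n+1)) :=
  if h : ({a, m, l} : Finset (Fin n)).card = 3 then [castTriple ⟨{a, m, l}, h⟩] else []

def sigL (a b : Fin n) : List (TripleIndex (n+1)) :=
  if h : a ≠ b then [sigTriple ⟨(a, b), h⟩] else []

def upL (a m : Fin n) : List (TripleIndex (n+1)) :=
  ((List.finRange n).filter fun l => decide (m < l)).flatMap (atriList a m)

def lowL (a m : Fin n) : List (TripleIndex (n+1)) :=
  ((List.finRange n).filter fun l => decide (l < m)).flatMap (atriList a m)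

def blkL (a m b : Fin n) : List (TripleIndex (n+1)) := upL a m ++ sigL a b ++ lowL a m

def pflatL (a b : Fin n) : List (TripleIndex (n+1)) :=
  ((List.finRange n).filter fun m => decide (a < m ∧ m < b)).flatMap
    fun m => (blkL a m m).reverse

def wordL (a b : Fin n) : List (TripleIndex (n+1)) :=
  pflatL a b ++ (upL a b ++ sigL a b ++ lowL a b) ++ (upL a b ++ sigL b a ++ lowL a b) ++
    (pflatL a b).reverse


lemma gn3Word_atriList (a m l : Fin n) :
    gn3Word (atriList a m l) = atri (FA (n := n)) a m l := by
  unfold atriList atri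
  split <;> simp [gn3Word, FA]

lemma gn3Word_sigL (a b : Fin n) :
    gn3Word (sigL a b) = sgen (FS (n := n)) a b := by
  unfold sigL sgen
  split <;> simp [gn3Word, FS]

lemma gn3Word_sigL_inv (a b : Fin n) :
    gn3Word (sigL a b) = (sgen (FS (n := n)) a b)⁻¹ := by
  rw [gn3Word_sigL]
  unfold sgen
  split
  · exact (gn3_of_inv _).symm
  · simp

lemma gn3Word_upL (a m : Fin n) :
    gn3Word (upL a m) = listUp (fun l => atri (FA (n := n)) a m l) m := by
  unfold upL listUp
  rw [gn3Word_flatMap]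
  have hfun : (fun l => gn3Word (atriList a m l)) = fun l : Fin n => atri (FA (n := n)) a m l :=
    funext fun l => gn3Word_atriList a m l
  rw [hfun]

lemma gn3Word_lowL (a m : Fin n) :
    gn3Word (lowL a m) = listLow (fun l => atri (FA (n := n)) a m l) m := by
  unfold lowL listLow
  rw [gn3Word_flatMap]
  have hfun : (fun l => gn3Word (atriList a m l)) = fun l : Fin n => atri (FA (n := n)) a m l :=
    funext fun l => gn3Word_atriList a m l
  rw [hfun]

lemma gn3Word_blk (a m b : Fin n) :
    gn3Word (blkL a m b) = cMid (FA (n := n)) (sgen FS a b) a m := by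
  unfold blkL cMid
  rw [gn3Word_append, gn3Word_append, gn3Word_upL, gn3Word_lowL, gn3Word_sigL]

lemma gn3Word_blk_inv (a m b : Fin n) :
    gn3Word (blkL a m b) = cMid (FA (n := n)) (sgen FS a b)⁻¹ a m := by
  unfold blkL cMid
  rw [gn3Word_append, gn3Word_append, gn3Word_upL, gn3Word_lowL, gn3Word_sigL_inv]

lemma gn3Word_wordL (a b : Fin n) :
    gn3Word (wordL a b) = tphiWord (FA (n := n)) FS a b := by
  unfold wordL tphiWord
  rw [gn3Word_append, gn3Word_append, gn3Word_append, ← gn3Word_inv]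
  have hp : gn3Word (pflatL a b) =
      (((List.finRange n).filter fun m => decide (a < m ∧ m < b)).map
        fun m => (cMid (FA (n := n)) (sgen FS a m)⁻¹ a m)⁻¹).prod := by
    unfold pflatL
    rw [gn3Word_flatMap]
    have hfun : (fun m => gn3Word ((blkL a m m).reverse)) =
        fun m : Fin n => (cMid (FA (n := n)) (sgen FS a m)⁻¹ a m)⁻¹ := by
      funext m
      rw [← gn3Word_inv, gn3Word_blk_inv]
    rw [hfun]
  rw [hp]
  have h1 : gn3Word (upL a b ++ sigL a b ++ lowL a b) =
      cMid (FA (n := n)) (sgen FS a b) a b := gn3Word_blk a b b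
  have h2 : gn3Word (upL a b ++ sigL b a ++ lowL a b) =
      cMid (FA (n := n)) (sgen FS b a) a b := by
    unfold cMid
    rw [gn3Word_append, gn3Word_append, gn3Word_upL, gn3Word_lowL, gn3Word_sigL]
  rw [h1, h2]

lemma pi_tphiGen (π : TGn3 n →* Gn3 (n + 1))
    (hπ : ∀ g : TGen n, π (PresentedGroup.of g) = piGen g) (p : PBGen n) :
    π (tphiGen p) = gn3Word (wordL p.1.1 p.1.2) := by
  unfold tphiGen
  rw [map_tphiWord, gn3Word_wordL]
  have h1 : (⇑π ∘ fun t => PresentedGroup.of (Sum.inl t)) = FA (n := n) :=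
    funext fun t => hπ (Sum.inl t)
  have h2 : (⇑π ∘ fun q => PresentedGroup.of (Sum.inr q)) = FS (n := n) :=
    funext fun q => hπ (Sum.inr q)
  rw [h1, h2]

end St9
namespace St9
open List

variable {n : ℕ}

def IJKs (i j k : Fin n) : Finset (Fin (n+1)) := {i.castSucc, j.castSucc, k.castSucc}

def lastIdx (i j k : Fin n) :
    {l : Fin (n+1) // l ≠ i.castSucc ∧ l ≠ j.castSucc ∧ l ≠ k.castSucc} :=
  ⟨Fin.last n, (Fin.castSucc_lt_last i).ne', (Fin.castSucc_lt_last j).ne',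
    (Fin.castSucc_lt_last k).ne'⟩

/-! ### the sign homomorphism -/

def chi (i j k : Fin n) (v : ZMod 2 × ZMod 2) :
    Fn3 (n+1) i.castSucc j.castSucc k.castSucc →* ℤˣ :=
  PresentedGroup.toGroup (f := fun f => if f (lastIdx i j k) = v then -1 else 1) (by
    rintro r ⟨f, rfl⟩
    rw [map_mul, FreeGroup.lift_apply_of]
    split <;> simp)

lemma chi_of (i j k : Fin n) (v : ZMod 2 × ZMod 2)
    (f : Fn3Idx (n+1) i.castSucc j.castSucc k.castSucc) :
    chi i j k v (PresentedGroup.of f) = if f (lastIdx i j k) = v then -1 else 1 :=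
  PresentedGroup.toGroup.of _

/-! ### counting function -/

def cntV (i j k : Fin n) (v : ZMod 2 × ZMod 2) :
    List (TripleIndex (n+1)) → List (TripleIndex (n+1)) → ℕ
  | _, [] => 0
  | pre, t :: rest =>
      (if t.1 = IJKs i j k ∧
          idxOf i.castSucc j.castSucc k.castSucc pre (lastIdx i j k) = v then 1 else 0) +
        cntV i j k v (pre ++ [t]) rest

lemma chi_wRec (i j k : Fin n) (v : ZMod 2 × ZMod 2) :
    ∀ (L pre : List (TripleIndex (n+1))),
      chi i j k v (wRec i.castSucc j.castSucc k.castSucc pre L) =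
        (-1 : ℤˣ) ^ (cntV i j k v pre L) := by
  intro L
  induction L with
  | nil => intro pre; simp [wRec, cntV]
  | cons t rest ih =>
      intro pre
      rw [wRec, cntV, map_mul, ih, pow_add]
      congr 1
      rcases eq_or_ne t.1 (IJKs i j k) with h1 | h1
      · rw [if_pos, chi_of]
        · rcases eq_or_ne (idxOf i.castSucc j.castSucc k.castSucc pre (lastIdx i j k)) v
            with h2 | h2
          · rw [if_pos h2, if_pos ⟨h1, h2⟩, pow_one]
          · rw [if_neg h2, if_neg (by tauto), pow_zero]
        · exact h1
      · rw [if_neg, if_neg (by tauto), pow_zero, map_one]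
        exact h1

lemma chi_wWord (i j k : Fin n) (v : ZMod 2 × ZMod 2) (L : List (TripleIndex (n+1))) :
    chi i j k v (wWord i.castSucc j.castSucc k.castSucc L) = (-1 : ℤˣ) ^ (cntV i j k v [] L) :=
  chi_wRec i j k v L []

/-! ### state tracking -/

def Rst (i j k : Fin n) (pre : List (TripleIndex (n+1))) : ZMod 2 × ZMod 2 :=
  idxOf i.castSucc j.castSucc k.castSucc pre (lastIdx i j k)

def dR (i j k : Fin n) (t : TripleIndex (n+1)) : ZMod 2 × ZMod 2 :=
  (((cntA [t] j.castSucc k.castSucc (Fin.last n) +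
      cntA [t] i.castSucc j.castSucc (Fin.last n) : ℕ) : ZMod 2),
   ((cntA [t] i.castSucc k.castSucc (Fin.last n) +
      cntA [t] i.castSucc j.castSucc (Fin.last n) : ℕ) : ZMod 2))

lemma cntA_append (p q : List (TripleIndex n)) (x y z : Fin n) :
    cntA (p ++ q) x y z = cntA p x y z + cntA q x y z := by
  simp [cntA, List.countP_append]

lemma Rst_append_single (i j k : Fin n) (pre : List (TripleIndex (n+1)))
    (t : TripleIndex (n+1)) : Rst i j k (pre ++ [t]) = Rst i j k pre + dR i j k t := by
  unfold Rst dR _root_.idxOf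
  show ((((cntA (pre ++ [t]) _ _ _ + cntA (pre ++ [t]) _ _ _ : ℕ)) : ZMod 2), _) = _
  simp only [cntA_append, lastIdx, Prod.mk_add_mk, Prod.mk.injEq]
  constructor <;> push_cast <;> ring

lemma cntA_single (t : TripleIndex n) (x y z : Fin n) :
    cntA [t] x y z = if t.1 = ({x, y, z} : Finset (Fin n)) then 1 else 0 := by
  simp [cntA, List.countP_cons]

lemma Rst_nil (i j k : Fin n) : Rst i j k [] = 0 := by
  unfold Rst _root_.idxOf
  simp [cntA, lastIdx]

lemma dR_zero_of_last_not_mem (i j k : Fin n) (t : TripleIndex (n+1))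
    (h : Fin.last n ∉ t.1) : dR i j k t = 0 := by
  have hz : ∀ x y : Fin (n+1), cntA [t] x y (Fin.last n) = 0 := by
    intro x y
    rw [cntA_single, if_neg]
    intro hh
    exact h (hh ▸ (by simp : Fin.last n ∈ ({x, y, Fin.last n} : Finset (Fin (n+1)))))
  unfold dR
  simp [hz]

lemma last_not_mem_IJKs (i j k : Fin n) : Fin.last n ∉ IJKs i j k := by
  unfold IJKs
  simp only [Finset.mem_insert, Finset.mem_singleton, not_or]
  exact ⟨(Fin.castSucc_lt_last i).ne', (Fin.castSucc_lt_last j).ne',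
    (Fin.castSucc_lt_last k).ne'⟩

lemma dR_cast (i j k : Fin n) (u : TripleIndex n) : dR i j k (castTriple u) = 0 :=
  dR_zero_of_last_not_mem i j k _ (last_not_mem_castTriple u)

lemma dR_sig (i j k a b : Fin n) (hab : a ≠ b) :
    dR i j k (sigTriple ⟨(a, b), hab⟩) =
      ((((if ({a, b} : Finset (Fin n)) = {j, k} then (1 : ℕ) else 0) +
        (if ({a, b} : Finset (Fin n)) = {i, j} then (1 : ℕ) else 0) : ℕ) : ZMod 2),
       (((if ({a, b} : Finset (Fin n)) = {i, k} then (1 : ℕ) else 0) +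
        (if ({a, b} : Finset (Fin n)) = {i, j} then (1 : ℕ) else 0) : ℕ) : ZMod 2)) := by
  have hc : ∀ x y : Fin n, cntA [sigTriple ⟨(a, b), hab⟩] x.castSucc y.castSucc (Fin.last n) =
      if ({a, b} : Finset (Fin n)) = {x, y} then 1 else 0 := by
    intro x y
    rw [cntA_single, sigTriple_val]
    by_cases h : ({a, b} : Finset (Fin n)) = {x, y}
    · rw [if_pos ((sig_eq_sig_iff a b x y).mpr h), if_pos h]
    · rw [if_neg (fun hh => h ((sig_eq_sig_iff a b x y).mp hh)), if_neg h]
  unfold dR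
  rw [hc, hc, hc]

/-! ### segments -/

def SegOk (i j k : Fin n) (L : List (TripleIndex (n+1))) :
    Option (ZMod 2 × ZMod 2) → Prop
  | none => ∃ t, L = [t] ∧ t.1 = IJKs i j k
  | some δ => (∀ t ∈ L, t.1 ≠ IJKs i j k) ∧
      ∀ pre, Rst i j k (pre ++ L) = Rst i j k pre + δ

def runCnt (v : ZMod 2 × ZMod 2) :
    ZMod 2 × ZMod 2 → List (Option (ZMod 2 × ZMod 2)) → ℕ
  | _, [] => 0
  | s, none :: r => (if s = v then 1 else 0) + runCnt v s r
  | s, some δ :: r => runCnt v (s + δ) r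

lemma cntV_append (i j k : Fin n) (v : ZMod 2 × ZMod 2) :
    ∀ (L1 L2 pre : List (TripleIndex (n+1))),
      cntV i j k v pre (L1 ++ L2) = cntV i j k v pre L1 + cntV i j k v (pre ++ L1) L2 := by
  intro L1
  induction L1 with
  | nil => intro L2 pre; simp [cntV]
  | cons t rest ih =>
      intro L2 pre
      rw [List.cons_append, cntV, cntV, ih]
      have he : pre ++ t :: rest = pre ++ [t] ++ rest := by simp
      rw [he, Nat.add_assoc]

lemma cntV_no_occ (i j k : Fin n) (v : ZMod 2 × ZMod 2) :
    ∀ (L pre : List (TripleIndex (n+1))), (∀ t ∈ L, t.1 ≠ IJKs i j k) →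
      cntV i j k v pre L = 0 := by
  intro L
  induction L with
  | nil => intro pre _; rfl
  | cons t rest ih =>
      intro pre h
      rw [cntV, if_neg (by exact fun hh => h t (by simp) hh.1), ih _
        (fun u hu => h u (by simp [hu]))]

lemma cntV_segs (i j k : Fin n) (v : ZMod 2 × ZMod 2) :
    ∀ (ss : List (List (TripleIndex (n+1)) × Option (ZMod 2 × ZMod 2))),
      (∀ s ∈ ss, SegOk i j k s.1 s.2) → ∀ pre,
        cntV i j k v pre (ss.map Prod.fst).flatten =
          runCnt v (Rst i j k pre) (ss.map Prod.snd) := by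
  intro ss
  induction ss with
  | nil => intro _ pre; simp [cntV, runCnt]
  | cons s ss ih =>
      intro hok pre
      have hs := hok s (by simp)
      have hss : ∀ u ∈ ss, SegOk i j k u.1 u.2 := fun u hu => hok u (by simp [hu])
      rw [List.map_cons, List.flatten_cons, cntV_append, List.map_cons]
      obtain ⟨L, o⟩ := s
      match o with
      | none =>
          obtain ⟨t, hL, ht⟩ := hs
          simp only at hL ht
          subst hL
          rw [runCnt]
          congr 1
          · show cntV i j k v pre [t] = _
            rw [cntV, cntV]
            by_cases h2 : Rst i j k pre = v
            · rw [if_pos ⟨ht, h2⟩, if_pos h2]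
            · rw [if_neg (fun hh => h2 hh.2), if_neg h2]
          · rw [ih hss]
            congr 1
            rw [Rst_append_single]
            have hdz : dR i j k t = 0 :=
              dR_zero_of_last_not_mem i j k t (ht ▸ last_not_mem_IJKs i j k)
            rw [hdz, add_zero]
      | some δ =>
          obtain ⟨hno, hR⟩ := hs
          rw [runCnt, cntV_no_occ i j k v L pre hno, ih hss, hR pre, zero_add]
end St9
namespace St9
open List

variable {n : ℕ}

/-! ### invisibility -/

def Inv (i j k : Fin n) (L : List (TripleIndex (n+1))) : Prop :=
  ∀ t ∈ L, t.1 ≠ IJKs i j k ∧ dR i j k t = 0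

lemma Inv_append {i j k : Fin n} {L1 L2 : List (TripleIndex (n+1))}
    (h1 : Inv i j k L1) (h2 : Inv i j k L2) : Inv i j k (L1 ++ L2) := by
  intro t ht
  rcases List.mem_append.mp ht with h | h
  · exact h1 t h
  · exact h2 t h

lemma Inv_reverse {i j k : Fin n} {L : List (TripleIndex (n+1))}
    (h : Inv i j k L) : Inv i j k L.reverse := fun t ht => h t (List.mem_reverse.mp ht)

lemma Inv_flatMap {i j k : Fin n} {β : Type*} {M : List β} {f : β → List (TripleIndex (n+1))}
    (h : ∀ m ∈ M, Inv i j k (f m)) : Inv i j k (M.flatMap f) := by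
  intro t ht
  obtain ⟨m, hm, htm⟩ := List.mem_flatMap.mp ht
  exact h m hm t htm

lemma Rst_append_inv {i j k : Fin n} :
    ∀ {L : List (TripleIndex (n+1))}, Inv i j k L → ∀ (pre : List (TripleIndex (n+1))),
      Rst i j k (pre ++ L) = Rst i j k pre := by
  intro L
  induction L with
  | nil => intro _ pre; rw [List.append_nil]
  | cons t rest ih =>
      intro h pre
      have he : pre ++ t :: rest = (pre ++ [t]) ++ rest := by simp
      rw [he, ih (fun u hu => h u (by simp [hu])), Rst_append_single,
        (h t (by simp)).2, add_zero]

lemma SegOk_inv {i j k : Fin n} {L : List (TripleIndex (n+1))} (h : Inv i j k L) :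
    SegOk i j k L (some 0) :=
  ⟨fun t ht => (h t ht).1, fun pre => by rw [Rst_append_inv h, add_zero]⟩

lemma SegOk_occ {i j k : Fin n} {t : TripleIndex (n+1)} (ht : t.1 = IJKs i j k) :
    SegOk i j k [t] none := ⟨t, rfl, ht⟩

lemma SegOk_sig {i j k a b : Fin n} (hab : a ≠ b) {δ : ZMod 2 × ZMod 2}
    (hδ : dR i j k (sigTriple ⟨(a, b), hab⟩) = δ) :
    SegOk i j k (sigL a b) (some δ) := by
  unfold sigL
  rw [dif_pos hab]
  constructor
  · intro t ht
    rw [List.mem_singleton.mp ht]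
    intro h
    exact last_not_mem_IJKs i j k (h ▸ (by rw [sigTriple_val]; simp))
  · intro pre
    rw [Rst_append_single, hδ]

/-! ### letters of the atri lists -/

lemma mem_atriList {a m l : Fin n} {t : TripleIndex (n+1)} (h : t ∈ atriList a m l) :
    t.1 = ({a.castSucc, m.castSucc, l.castSucc} : Finset (Fin (n+1))) ∧
      Fin.last n ∉ t.1 := by
  unfold atriList at h
  split at h
  · rw [List.mem_singleton.mp h]
    exact ⟨castTriple_triple_val _ _ _ _, last_not_mem_castTriple _⟩
  · exact absurd h List.not_mem_nil

lemma Inv_atri_flat {i j k a m : Fin n} (P : Fin n → Bool)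
    (h : ∀ l, P l = true → ({a, m, l} : Finset (Fin n)) ≠ ({i, j, k} : Finset (Fin n))) :
    Inv i j k (((List.finRange n).filter P).flatMap (atriList a m)) := by
  apply Inv_flatMap
  intro l hl t ht
  obtain ⟨hval, hlast⟩ := mem_atriList ht
  refine ⟨?_, dR_zero_of_last_not_mem i j k t hlast⟩
  rw [hval]
  intro hh
  exact h l (by simpa using (List.mem_filter.mp hl).2)
    ((cast_triple_eq_iff a m l i j k).mp hh)

lemma Inv_upL {i j k a m : Fin n}
    (h : ∀ l, m < l → ({a, m, l} : Finset (Fin n)) ≠ ({i, j, k} : Finset (Fin n))) :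
    Inv i j k (upL a m) :=
  Inv_atri_flat _ (fun l hl => h l (by simpa using hl))

lemma Inv_lowL {i j k a m : Fin n}
    (h : ∀ l, l < m → ({a, m, l} : Finset (Fin n)) ≠ ({i, j, k} : Finset (Fin n))) :
    Inv i j k (lowL a m) :=
  Inv_atri_flat _ (fun l hl => h l (by simpa using hl))

lemma Inv_sigL {i j k a b : Fin n}
    (h1 : ({a, b} : Finset (Fin n)) ≠ {j, k}) (h2 : ({a, b} : Finset (Fin n)) ≠ {i, j})
    (h3 : ({a, b} : Finset (Fin n)) ≠ {i, k}) :
    Inv i j k (sigL a b) := by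
  unfold sigL
  split
  · intro t ht
    rw [List.mem_singleton.mp ht]
    constructor
    · intro h
      exact last_not_mem_IJKs i j k (h ▸ (by rw [sigTriple_val]; simp))
    · rw [dR_sig, if_neg h1, if_neg h2, if_neg h3]
      rfl
  · intro t ht; exact absurd ht List.not_mem_nil

lemma Inv_blkL {i j k a m c : Fin n}
    (h : ∀ l, ({a, m, l} : Finset (Fin n)) ≠ ({i, j, k} : Finset (Fin n)))
    (h1 : ({a, c} : Finset (Fin n)) ≠ {j, k}) (h2 : ({a, c} : Finset (Fin n)) ≠ {i, j})
    (h3 : ({a, c} : Finset (Fin n)) ≠ {i, k}) :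
    Inv i j k (blkL a m c) :=
  Inv_append (Inv_append (Inv_upL (fun l _ => h l)) (Inv_sigL h1 h2 h3))
    (Inv_lowL (fun l _ => h l))

/-! ### refutation helpers -/

lemma triple_ne_fst {i j k a m l : Fin n} (h1 : i ≠ a) (h2 : i ≠ m) (h3 : i ≠ l) :
    ({a, m, l} : Finset (Fin n)) ≠ ({i, j, k} : Finset (Fin n)) := fun h => by
  rcases (triple_eq_mem h).2.2.2.1 with hh | hh | hh
  exacts [h1 hh, h2 hh, h3 hh]

lemma triple_ne_snd {i j k a m l : Fin n} (h1 : j ≠ a) (h2 : j ≠ m) (h3 : j ≠ l) :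
    ({a, m, l} : Finset (Fin n)) ≠ ({i, j, k} : Finset (Fin n)) := fun h => by
  rcases (triple_eq_mem h).2.2.2.2.1 with hh | hh | hh
  exacts [h1 hh, h2 hh, h3 hh]

lemma triple_ne_trd {i j k a m l : Fin n} (h1 : k ≠ a) (h2 : k ≠ m) (h3 : k ≠ l) :
    ({a, m, l} : Finset (Fin n)) ≠ ({i, j, k} : Finset (Fin n)) := fun h => by
  rcases (triple_eq_mem h).2.2.2.2.2 with hh | hh | hh
  exacts [h1 hh, h2 hh, h3 hh]

lemma triple_ne_mid {i j k a m l : Fin n} (h1 : m ≠ i) (h2 : m ≠ j) (h3 : m ≠ k) :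
    ({a, m, l} : Finset (Fin n)) ≠ ({i, j, k} : Finset (Fin n)) := fun h => by
  rcases (triple_eq_mem h).2.1 with hh | hh | hh
  exacts [h1 hh, h2 hh, h3 hh]

lemma pair_ne {a c x y : Fin n} (h1 : ¬(a = x ∧ c = y)) (h2 : ¬(a = y ∧ c = x)) :
    ({a, c} : Finset (Fin n)) ≠ {x, y} := fun h => by
  rcases (pair_eq_pair_iff a c x y).mp h with hh | hh
  exacts [h1 hh, h2 hh]

end St9
namespace St9
open List

variable {n : ℕ}

lemma atriList_reverse (a m l : Fin n) : (atriList a m l).reverse = atriList a m l := by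
  unfold atriList; split <;> simp

lemma sigL_reverse (a b : Fin n) : (sigL a b).reverse = sigL a b := by
  unfold sigL; split <;> simp

lemma card_triple {a b c : Fin n} (hab : a ≠ b) (hac : a ≠ c) (hbc : b ≠ c) :
    ({a, b, c} : Finset (Fin n)).card = 3 :=
  Finset.card_eq_three.mpr ⟨a, b, c, hab, hac, hbc, rfl⟩

lemma SegOk_atri_occ {i j k a m c : Fin n} (h3 : ({a, m, c} : Finset (Fin n)).card = 3)
    (heq : ({a, m, c} : Finset (Fin n)) = {i, j, k}) :
    SegOk i j k (atriList a m c) none := by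
  unfold atriList
  rw [dif_pos h3]
  exact SegOk_occ (by
    rw [castTriple_triple_val]
    exact (cast_triple_eq_iff a m c i j k).mpr heq)

/-- letters `a m l` with `m < l < c`. -/
def upA (a m c : Fin n) : List (TripleIndex (n+1)) :=
  ((List.finRange n).filter fun x => decide (m < x) && decide (x < c)).flatMap (atriList a m)

/-- letters `a m l` with `m < l`, `c < l`. -/
def upB (a m c : Fin n) : List (TripleIndex (n+1)) :=
  ((List.finRange n).filter fun x => decide (m < x) && decide (c < x)).flatMap (atriList a m)

/-- letters `a m l` with `l < m`, `l < c`. -/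
def lowA (a m c : Fin n) : List (TripleIndex (n+1)) :=
  ((List.finRange n).filter fun x => decide (x < m) && decide (x < c)).flatMap (atriList a m)

/-- letters `a m l` with `l < m`, `c < l`. -/
def lowB (a m c : Fin n) : List (TripleIndex (n+1)) :=
  ((List.finRange n).filter fun x => decide (x < m) && decide (c < x)).flatMap (atriList a m)

/-- blocks of `pflatL a b` with `m < c`. -/
def pfA (a b c : Fin n) : List (TripleIndex (n+1)) :=
  (((List.finRange n).filter fun x => decide (a < x ∧ x < b) && decide (x < c)).flatMap
    fun m => (blkL a m m).reverse)

/-- blocks of `pflatL a b` with `c < m`. -/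
def pfB (a b c : Fin n) : List (TripleIndex (n+1)) :=
  (((List.finRange n).filter fun x => decide (a < x ∧ x < b) && decide (c < x)).flatMap
    fun m => (blkL a m m).reverse)

/-- split of `upL a m` at a pivot `c > m`. -/
lemma upL_split {a m c : Fin n} (hc : m < c) :
    upL a m = upA a m c ++ atriList a m c ++ upB a m c := by
  unfold upA upB
  unfold upL
  rw [finRange_filter_split c (fun l => decide (m < l)) (by simpa using hc)]
  rw [List.flatMap_append, List.flatMap_cons]
  simp [List.append_assoc]

/-- split of `lowL a m` at a pivot `c < m`. -/
lemma lowL_split {a m c : Fin n} (hc : c < m) :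
    lowL a m = lowA a m c ++ atriList a m c ++ lowB a m c := by
  unfold lowA lowB
  unfold lowL
  rw [finRange_filter_split c (fun l => decide (l < m)) (by simpa using hc)]
  rw [List.flatMap_append, List.flatMap_cons]
  simp [List.append_assoc]

/-- split of the `pflat` list at a pivot. -/
lemma pflat_split {a b c : Fin n} (hc : a < c ∧ c < b) :
    pflatL a b = pfA a b c ++ (blkL a c c).reverse ++ pfB a b c := by
  unfold pfA pfB
  unfold pflatL
  rw [finRange_filter_split c (fun m => decide (a < m ∧ m < b)) (by simpa using hc)]
  rw [List.flatMap_append, List.flatMap_cons]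
  simp [List.append_assoc]

end St9
namespace St9
open List

variable {n : ℕ}

section words
variable {i j k : Fin n} (hij : i < j) (hjk : j < k)

include hij hjk

lemma Inv_pflat_ij : Inv i j k (pflatL i j) := by
  apply Inv_flatMap
  intro m hm
  have hm' : i < m ∧ m < j := by simpa using (List.mem_filter.mp hm).2
  have hik : i < k := hij.trans hjk
  apply Inv_reverse
  apply Inv_blkL
  · intro l
    exact triple_ne_mid (ne_of_gt hm'.1) (ne_of_lt hm'.2) (ne_of_lt (hm'.2.trans hjk))
  · exact pair_ne (fun h => hij.ne h.1) (fun h => hik.ne h.1)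
  · exact pair_ne (fun h => hm'.2.ne h.2) (fun h => hij.ne h.1)
  · exact pair_ne (fun h => (hm'.2.trans hjk).ne h.2) (fun h => hik.ne h.1)

lemma Inv_lowL_ij : Inv i j k (lowL i j) := by
  have hik : i < k := hij.trans hjk
  exact Inv_lowL (fun l hl =>
    triple_ne_trd (ne_of_gt hik) (ne_of_gt hjk) (ne_of_gt (hl.trans hjk)))

lemma Inv_upA_ij : Inv i j k (upA i j k) := by
  have hik : i < k := hij.trans hjk
  exact Inv_atri_flat _ (fun l hl => by
    have h2 : j < l ∧ l < k := by simpa using hl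
    exact triple_ne_trd (ne_of_gt hik) (ne_of_gt hjk) (ne_of_gt h2.2))

lemma Inv_upB_ij : Inv i j k (upB i j k) := by
  have hik : i < k := hij.trans hjk
  exact Inv_atri_flat _ (fun l hl => by
    have h2 : j < l ∧ k < l := by simpa using hl
    exact triple_ne_trd (ne_of_gt hik) (ne_of_gt hjk) (ne_of_lt h2.2))

lemma occ_ijk : SegOk i j k (atriList i j k) none :=
  SegOk_atri_occ (card_triple hij.ne (hij.trans hjk).ne hjk.ne) rfl

lemma sig_ij : SegOk i j k (sigL i j) (some (1, 1)) := by
  have hik : i < k := hij.trans hjk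
  apply SegOk_sig hij.ne
  rw [dR_sig, if_neg (pair_ne (fun h => hij.ne h.1) (fun h => hik.ne h.1)),
    if_pos rfl, if_neg (pair_ne (fun h => hjk.ne h.2) (fun h => hik.ne h.1))]
  simp

lemma sig_ji : SegOk i j k (sigL j i) (some (1, 1)) := by
  have hik : i < k := hij.trans hjk
  apply SegOk_sig hij.ne'
  rw [dR_sig, if_neg (pair_ne (fun h => hik.ne h.2) (fun h => hjk.ne h.1)),
    if_pos ((pair_eq_pair_iff j i i j).mpr (Or.inr ⟨rfl, rfl⟩)),
    if_neg (pair_ne (fun h => hij.ne' h.1) (fun h => hjk.ne h.1))]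
  simp

lemma cnt_ij (v : ZMod 2 × ZMod 2) :
    cntV i j k v [] (wordL i j) =
      runCnt v 0 [some 0, some 0, none, some 0, some (1, 1), some 0,
        some 0, none, some 0, some (1, 1), some 0, some 0] := by
  have hdecomp : wordL i j =
      (([(pflatL i j, (some 0 : Option (ZMod 2 × ZMod 2))), (upA i j k, some 0),
        (atriList i j k, none), (upB i j k, some 0), (sigL i j, some (1, 1)),
        (lowL i j, some 0), (upA i j k, some 0), (atriList i j k, none),
        (upB i j k, some 0), (sigL j i, some (1, 1)), (lowL i j, some 0),
        ((pflatL i j).reverse, some 0)]).map Prod.fst).flatten := by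
    unfold wordL
    rw [upL_split hjk]
    simp [List.append_assoc]
  rw [hdecomp, cntV_segs i j k v _ ?hok [], Rst_nil]
  case hok =>
    intro s hs
    simp only [List.mem_cons, List.not_mem_nil, or_false] at hs
    rcases hs with rfl | rfl | rfl | rfl | rfl | rfl | rfl | rfl | rfl | rfl | rfl | rfl
    exacts [SegOk_inv (Inv_pflat_ij hij hjk), SegOk_inv (Inv_upA_ij hij hjk),
      occ_ijk hij hjk, SegOk_inv (Inv_upB_ij hij hjk), sig_ij hij hjk,
      SegOk_inv (Inv_lowL_ij hij hjk), SegOk_inv (Inv_upA_ij hij hjk), occ_ijk hij hjk,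
      SegOk_inv (Inv_upB_ij hij hjk), sig_ji hij hjk, SegOk_inv (Inv_lowL_ij hij hjk),
      SegOk_inv (Inv_reverse (Inv_pflat_ij hij hjk))]
  rfl

end words
end St9
namespace St9
open List

variable {n : ℕ}

section words2
variable {i j k : Fin n} (hij : i < j) (hjk : j < k)

include hij hjk

lemma Inv_pflat_jk : Inv i j k (pflatL j k) := by
  apply Inv_flatMap
  intro m hm
  have hm' : j < m ∧ m < k := by simpa using (List.mem_filter.mp hm).2
  apply Inv_reverse
  apply Inv_blkL
  · intro l
    exact triple_ne_mid (ne_of_gt (hij.trans hm'.1)) (ne_of_gt hm'.1) (ne_of_lt hm'.2)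
  · exact pair_ne (fun h => hm'.2.ne h.2) (fun h => hjk.ne h.1)
  · exact pair_ne (fun h => hij.ne' h.1) (fun h => (hij.trans hm'.1).ne' h.2)
  · exact pair_ne (fun h => hij.ne' h.1) (fun h => hjk.ne h.1)

lemma Inv_upL_jk : Inv i j k (upL j k) := by
  have hik : i < k := hij.trans hjk
  exact Inv_upL (fun l hl =>
    triple_ne_fst (ne_of_lt hij) (ne_of_lt hik) (ne_of_lt (hik.trans hl)))

lemma Inv_lowA_jk : Inv i j k (lowA j k i) := by
  have hik : i < k := hij.trans hjk
  exact Inv_atri_flat _ (fun l hl => by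
    have h2 : l < k ∧ l < i := by simpa using hl
    exact triple_ne_fst (ne_of_lt hij) (ne_of_lt hik) (ne_of_gt h2.2))

lemma Inv_lowB_jk : Inv i j k (lowB j k i) := by
  have hik : i < k := hij.trans hjk
  exact Inv_atri_flat _ (fun l hl => by
    have h2 : l < k ∧ i < l := by simpa using hl
    exact triple_ne_fst (ne_of_lt hij) (ne_of_lt hik) (ne_of_lt h2.2))

lemma occ_jki : SegOk i j k (atriList j k i) none :=
  SegOk_atri_occ (card_triple hjk.ne (hij.ne') ((hij.trans hjk).ne'))
    (by ext x; simp; tauto)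

lemma sig_jk : SegOk i j k (sigL j k) (some (1, 0)) := by
  have hik : i < k := hij.trans hjk
  apply SegOk_sig hjk.ne
  rw [dR_sig, if_pos rfl,
    if_neg (pair_ne (fun h => hij.ne' h.1) (fun h => hik.ne' h.2)),
    if_neg (pair_ne (fun h => hij.ne' h.1) (fun h => hjk.ne h.1))]
  simp

lemma sig_kj : SegOk i j k (sigL k j) (some (1, 0)) := by
  have hik : i < k := hij.trans hjk
  apply SegOk_sig hjk.ne'
  rw [dR_sig, if_pos ((pair_eq_pair_iff k j j k).mpr (Or.inr ⟨rfl, rfl⟩)),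
    if_neg (pair_ne (fun h => hik.ne' h.1) (fun h => hjk.ne' h.1)),
    if_neg (pair_ne (fun h => hik.ne' h.1) (fun h => hij.ne' h.2))]
  simp

lemma cnt_jk (v : ZMod 2 × ZMod 2) :
    cntV i j k v [] (wordL j k) =
      runCnt v 0 [some 0, some 0, some (1, 0), some 0, none, some 0,
        some 0, some (1, 0), some 0, none, some 0, some 0] := by
  have hdecomp : wordL j k =
      (([(pflatL j k, (some 0 : Option (ZMod 2 × ZMod 2))), (upL j k, some 0),
        (sigL j k, some (1, 0)), (lowA j k i, some 0), (atriList j k i, none),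
        (lowB j k i, some 0), (upL j k, some 0), (sigL k j, some (1, 0)),
        (lowA j k i, some 0), (atriList j k i, none), (lowB j k i, some 0),
        ((pflatL j k).reverse, some 0)]).map Prod.fst).flatten := by
    unfold wordL
    rw [lowL_split (hij.trans hjk)]
    simp [List.append_assoc]
  rw [hdecomp, cntV_segs i j k v _ ?hok [], Rst_nil]
  case hok =>
    intro s hs
    simp only [List.mem_cons, List.not_mem_nil, or_false] at hs
    rcases hs with rfl | rfl | rfl | rfl | rfl | rfl | rfl | rfl | rfl | rfl | rfl | rfl
    exacts [SegOk_inv (Inv_pflat_jk hij hjk), SegOk_inv (Inv_upL_jk hij hjk),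
      sig_jk hij hjk, SegOk_inv (Inv_lowA_jk hij hjk), occ_jki hij hjk,
      SegOk_inv (Inv_lowB_jk hij hjk), SegOk_inv (Inv_upL_jk hij hjk), sig_kj hij hjk,
      SegOk_inv (Inv_lowA_jk hij hjk), occ_jki hij hjk, SegOk_inv (Inv_lowB_jk hij hjk),
      SegOk_inv (Inv_reverse (Inv_pflat_jk hij hjk))]
  rfl

end words2
end St9
namespace St9
open List

variable {n : ℕ}

section words3
variable {i j k : Fin n} (hij : i < j) (hjk : j < k)

include hij hjk

lemma Inv_pfA_ik : Inv i j k (pfA i k j) := by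
  apply Inv_flatMap
  intro m hm
  have hm' : (i < m ∧ m < k) ∧ m < j := by simpa using (List.mem_filter.mp hm).2
  have hmj : m < j := hm'.2
  have hmi : i < m := hm'.1.1
  apply Inv_reverse
  apply Inv_blkL
  · intro l
    exact triple_ne_mid (ne_of_gt hmi) (ne_of_lt hmj) (ne_of_lt (hmj.trans hjk))
  · exact pair_ne (fun h => hij.ne h.1) (fun h => (hij.trans hjk).ne h.1)
  · exact pair_ne (fun h => hmj.ne h.2) (fun h => hij.ne h.1)
  · exact pair_ne (fun h => (hmj.trans hjk).ne h.2) (fun h => (hij.trans hjk).ne h.1)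

lemma Inv_pfB_ik : Inv i j k (pfB i k j) := by
  apply Inv_flatMap
  intro m hm
  have hm' : (i < m ∧ m < k) ∧ j < m := by simpa using (List.mem_filter.mp hm).2
  have hmk : m < k := hm'.1.2
  have hjm : j < m := hm'.2
  apply Inv_reverse
  apply Inv_blkL
  · intro l
    exact triple_ne_mid (ne_of_gt (hij.trans hjm)) (ne_of_gt hjm) (ne_of_lt hmk)
  · exact pair_ne (fun h => hij.ne h.1) (fun h => (hij.trans hjk).ne h.1)
  · exact pair_ne (fun h => hjm.ne' h.2) (fun h => hij.ne h.1)
  · exact pair_ne (fun h => hmk.ne h.2) (fun h => (hij.trans hjk).ne h.1)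

lemma Inv_upL_ik : Inv i j k (upL i k) :=
  Inv_upL (fun l hl =>
    triple_ne_snd (ne_of_gt hij) (ne_of_lt hjk) (ne_of_lt (hjk.trans hl)))

lemma Inv_lowA_ik : Inv i j k (lowA i k j) :=
  Inv_atri_flat _ (fun l hl => by
    have h2 : l < k ∧ l < j := by simpa using hl
    exact triple_ne_snd (ne_of_gt hij) (ne_of_lt hjk) (ne_of_gt h2.2))

lemma Inv_lowB_ik : Inv i j k (lowB i k j) :=
  Inv_atri_flat _ (fun l hl => by
    have h2 : l < k ∧ j < l := by simpa using hl
    exact triple_ne_snd (ne_of_gt hij) (ne_of_lt hjk) (ne_of_lt h2.2))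

lemma occ_ikj : SegOk i j k (atriList i k j) none :=
  SegOk_atri_occ (card_triple (hij.trans hjk).ne hij.ne hjk.ne')
    (by ext x; simp; tauto)

lemma sig_ik : SegOk i j k (sigL i k) (some (0, 1)) := by
  apply SegOk_sig (hij.trans hjk).ne
  rw [dR_sig, if_neg (pair_ne (fun h => hij.ne h.1) (fun h => (hij.trans hjk).ne h.1)),
    if_neg (pair_ne (fun h => hjk.ne' h.2) (fun h => hij.ne h.1)),
    if_pos rfl]
  simp

lemma sig_ki : SegOk i j k (sigL k i) (some (0, 1)) := by
  apply SegOk_sig (hij.trans hjk).ne'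
  rw [dR_sig, if_neg (pair_ne (fun h => hjk.ne' h.1) (fun h => hij.ne h.2)),
    if_neg (pair_ne (fun h => (hij.trans hjk).ne' h.1) (fun h => hjk.ne' h.1)),
    if_pos ((pair_eq_pair_iff k i i k).mpr (Or.inr ⟨rfl, rfl⟩))]
  simp

lemma cnt_ik (v : ZMod 2 × ZMod 2) :
    cntV i j k v [] (wordL i k) =
      runCnt v 0 [some 0, some 0, some (1, 1), some 0, none, some 0, some 0,
        some 0, some (0, 1), some 0, none, some 0,
        some 0, some (0, 1), some 0, none, some 0,
        some 0, some 0, none, some 0, some (1, 1), some 0, some 0] := by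
  have hdecomp : wordL i k =
      (([(pfA i k j, (some 0 : Option (ZMod 2 × ZMod 2))),
        ((lowL i j).reverse, some 0), (sigL i j, some (1, 1)),
        ((upB i j k).reverse, some 0), (atriList i j k, none),
        ((upA i j k).reverse, some 0), (pfB i k j, some 0),
        (upL i k, some 0), (sigL i k, some (0, 1)), (lowA i k j, some 0),
        (atriList i k j, none), (lowB i k j, some 0),
        (upL i k, some 0), (sigL k i, some (0, 1)), (lowA i k j, some 0),
        (atriList i k j, none), (lowB i k j, some 0),
        ((pfB i k j).reverse, some 0), (upA i j k, some 0), (atriList i j k, none),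
        (upB i j k, some 0), (sigL i j, some (1, 1)), (lowL i j, some 0),
        ((pfA i k j).reverse, some 0)]).map Prod.fst).flatten := by
    unfold wordL
    rw [pflat_split ⟨hij, hjk⟩, lowL_split hjk]
    unfold blkL
    rw [upL_split hjk]
    simp [List.reverse_append, atriList_reverse, sigL_reverse, List.append_assoc]
  rw [hdecomp, cntV_segs i j k v _ ?hok [], Rst_nil]
  case hok =>
    intro s hs
    simp only [List.mem_cons, List.not_mem_nil, or_false] at hs
    rcases hs with rfl | rfl | rfl | rfl | rfl | rfl | rfl | rfl | rfl | rfl | rfl | rfl |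
      rfl | rfl | rfl | rfl | rfl | rfl | rfl | rfl | rfl | rfl | rfl | rfl
    exacts [SegOk_inv (Inv_pfA_ik hij hjk),
      SegOk_inv (Inv_reverse (Inv_lowL_ij hij hjk)), sig_ij hij hjk,
      SegOk_inv (Inv_reverse (Inv_upB_ij hij hjk)), occ_ijk hij hjk,
      SegOk_inv (Inv_reverse (Inv_upA_ij hij hjk)), SegOk_inv (Inv_pfB_ik hij hjk),
      SegOk_inv (Inv_upL_ik hij hjk), sig_ik hij hjk, SegOk_inv (Inv_lowA_ik hij hjk),
      occ_ikj hij hjk, SegOk_inv (Inv_lowB_ik hij hjk),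
      SegOk_inv (Inv_upL_ik hij hjk), sig_ki hij hjk, SegOk_inv (Inv_lowA_ik hij hjk),
      occ_ikj hij hjk, SegOk_inv (Inv_lowB_ik hij hjk),
      SegOk_inv (Inv_reverse (Inv_pfB_ik hij hjk)), SegOk_inv (Inv_upA_ij hij hjk),
      occ_ijk hij hjk, SegOk_inv (Inv_upB_ij hij hjk), sig_ij hij hjk,
      SegOk_inv (Inv_lowL_ij hij hjk), SegOk_inv (Inv_reverse (Inv_pfA_ik hij hjk))]
  rfl

end words3
end St9

/-- For `i < j < k`, the three elements
`\widetilde{w}_{ijk}(\widetilde{φ}(b_{ij}))`, `\widetilde{w}_{ijk}(\widetilde{φ}(b_{ik}))`,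
`\widetilde{w}_{ijk}(\widetilde{φ}(b_{jk}))` of `F_{n+1}^3` are pairwise distinct and none is
the identity. -/
theorem wtilde_phi_generators_distinct (n : ℕ) (i j k : Fin n) (hij : i < j) (hjk : j < k)
    (π : TGn3 n →* Gn3 (n + 1)) (hπ : ∀ g : TGen n, π (PresentedGroup.of g) = piGen g)
    (w : Gn3 (n + 1) →* Fn3 (n + 1) i.castSucc j.castSucc k.castSucc)
    (hw : ∀ L : List (TripleIndex (n + 1)),
      w (gn3Word L) = wWord i.castSucc j.castSucc k.castSucc L) :
    w (π (tphiGen ⟨(i, j), hij⟩)) ≠ w (π (tphiGen ⟨(i, k), hij.trans hjk⟩)) ∧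
    w (π (tphiGen ⟨(i, j), hij⟩)) ≠ w (π (tphiGen ⟨(j, k), hjk⟩)) ∧
    w (π (tphiGen ⟨(i, k), hij.trans hjk⟩)) ≠ w (π (tphiGen ⟨(j, k), hjk⟩)) ∧
    w (π (tphiGen ⟨(i, j), hij⟩)) ≠ 1 ∧
    w (π (tphiGen ⟨(i, k), hij.trans hjk⟩)) ≠ 1 ∧
    w (π (tphiGen ⟨(j, k), hjk⟩)) ≠ 1 := by
  have hword : ∀ (p : PBGen n), w (π (tphiGen p)) =
      wWord i.castSucc j.castSucc k.castSucc (St9.wordL p.1.1 p.1.2) := by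
    intro p
    rw [St9.pi_tphiGen π hπ p, hw]
  have hij' : w (π (tphiGen ⟨(i, j), hij⟩)) =
      wWord i.castSucc j.castSucc k.castSucc (St9.wordL i j) := hword _
  have hik' : w (π (tphiGen ⟨(i, k), hij.trans hjk⟩)) =
      wWord i.castSucc j.castSucc k.castSucc (St9.wordL i k) := hword _
  have hjk' : w (π (tphiGen ⟨(j, k), hjk⟩)) =
      wWord i.castSucc j.castSucc k.castSucc (St9.wordL j k) := hword _
  have e1 : St9.chi i j k (0, 0) (w (π (tphiGen ⟨(i, j), hij⟩))) = -1 := by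
    rw [hij', St9.chi_wWord, St9.cnt_ij hij hjk]
    decide
  have e2 : St9.chi i j k (0, 0) (w (π (tphiGen ⟨(i, k), hij.trans hjk⟩))) = 1 := by
    rw [hik', St9.chi_wWord, St9.cnt_ik hij hjk]
    decide
  have e3 : St9.chi i j k (0, 0) (w (π (tphiGen ⟨(j, k), hjk⟩))) = -1 := by
    rw [hjk', St9.chi_wWord, St9.cnt_jk hij hjk]
    decide
  have e4 : St9.chi i j k (1, 1) (w (π (tphiGen ⟨(i, j), hij⟩))) = -1 := by
    rw [hij', St9.chi_wWord, St9.cnt_ij hij hjk]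
    decide
  have e5 : St9.chi i j k (1, 1) (w (π (tphiGen ⟨(j, k), hjk⟩))) = 1 := by
    rw [hjk', St9.chi_wWord, St9.cnt_jk hij hjk]
    decide
  have e6 : St9.chi i j k (1, 1) (w (π (tphiGen ⟨(i, k), hij.trans hjk⟩))) = -1 := by
    rw [hik', St9.chi_wWord, St9.cnt_ik hij hjk]
    decide
  refine ⟨?_, ?_, ?_, ?_, ?_, ?_⟩
  · intro h
    rw [congrArg (St9.chi i j k (0, 0)) h, e2] at e1
    exact absurd e1 (by decide)
  · intro h
    rw [congrArg (St9.chi i j k (1, 1)) h, e5] at e4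
    exact absurd e4 (by decide)
  · intro h
    rw [congrArg (St9.chi i j k (0, 0)) h, e3] at e2
    exact absurd e2 (by decide)
  · intro h
    rw [h, map_one] at e1
    exact absurd e1 (by decide)
  · intro h
    rw [h, map_one] at e6
    exact absurd e6 (by decide)
  · intro h
    rw [h, map_one] at e3
    exact absurd e3 (by decide)
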